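/- arXiv:1504.01184 — 3 statements merged into one kernel-verified Lean document; each statement's English description precedes it below -/
import Mathlib

section
/- The condition defining a set K ⊂ ℝ^{1+n} that 'expands with speed less than one', namely K ⊆ {(t,x) : |x| ≤ c|t| + R} for some 0 < c < 1 and R > 0, is invariant under Lorentz boosts: if Λ is a linear map of ℝ^{1+n} preserving the Minkowski quadratic form -t² + |x|², then Λ(K) also satisfies such an inclusion (with possibly different constants 0 < c' < 1 and R' > 0). -/
/-- The Minkowski quadratic form `Q(t,x) = -t² + |x|²` on `ℝ × ℝⁿ`. -/
noncomputable def minkQ {n : ℕ} (v : ℝ × EuclideanSpace ℝ (Fin n)) : ℝ :=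
  -(v.1 ^ 2) + ‖v.2‖ ^ 2

set_option maxHeartbeats 4000000 in
/-- "Expanding with speed less than one" is Lorentz invariant: if `Λ` is a linear bijection
preserving the Minkowski quadratic form and `K ⊆ {|x| ≤ c|t| + R}` with `0 < c < 1`, `R > 0`,
then `Λ(K)` satisfies such an inclusion with possibly different constants. -/
theorem stmt2 {n : ℕ}
    (Λ : (ℝ × EuclideanSpace ℝ (Fin n)) ≃ₗ[ℝ] (ℝ × EuclideanSpace ℝ (Fin n)))
    (hΛ : ∀ z, minkQ (Λ z) = minkQ z)
    (K : Set (ℝ × EuclideanSpace ℝ (Fin n))) (c R : ℝ)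
    (hc0 : 0 < c) (hc1 : c < 1) (hR : 0 < R)
    (hK : K ⊆ {z : ℝ × EuclideanSpace ℝ (Fin n) | ‖z.2‖ ≤ c * |z.1| + R}) :
    ∃ c' R' : ℝ, 0 < c' ∧ c' < 1 ∧ 0 < R' ∧
      (Λ '' K) ⊆ {z : ℝ × EuclideanSpace ℝ (Fin n) | ‖z.2‖ ≤ c' * |z.1| + R'} := by
  -- operator norm bound for Λ
  obtain ⟨N, hN0, hNz⟩ : ∃ N : ℝ, 0 < N ∧ ∀ z, ‖Λ z‖ ≤ N * ‖z‖ := by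
    set L := LinearMap.toContinuousLinearMap Λ.toLinearMap with hL
    refine ⟨max ‖L‖ 1, lt_of_lt_of_le one_pos (le_max_right _ _), fun z => ?_⟩
    have h1 : ‖Λ z‖ ≤ ‖L‖ * ‖z‖ := L.le_opNorm z
    nlinarith [le_max_left ‖L‖ 1, norm_nonneg z]
  obtain ⟨a, ha0, ha⟩ : ∃ a : ℝ, 0 < a ∧ a = (1 - c ^ 2) / 2 :=
    ⟨_, by nlinarith, rfl⟩
  obtain ⟨a₂, ha₂0, haa⟩ : ∃ a₂ : ℝ, 0 < a₂ ∧ a₂ * (1 + 2 * c ^ 2) = a :=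
    ⟨a / (1 + 2 * c ^ 2), by positivity, div_mul_cancel₀ _ (by positivity)⟩
  obtain ⟨C2, hC20, hC2⟩ : ∃ C2 : ℝ, 0 < C2 ∧
      C2 = (c ^ 2 * R ^ 2 / a + R ^ 2) + 2 * a₂ * R ^ 2 :=
    ⟨_, by positivity, rfl⟩
  -- key pointwise bound on K
  have key : ∀ z ∈ K, minkQ z ≤ -a₂ * (z.1 ^ 2 + ‖z.2‖ ^ 2) + C2 := by
    intro z hz
    have hx : ‖z.2‖ ≤ c * |z.1| + R := hK hz
    have hx0 : (0:ℝ) ≤ ‖z.2‖ := norm_nonneg _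
    have ht0 : (0:ℝ) ≤ |z.1| := abs_nonneg _
    have ht2 : |z.1| ^ 2 = z.1 ^ 2 := sq_abs _
    have hxx : ‖z.2‖ ^ 2 ≤ (c * |z.1| + R) ^ 2 := pow_le_pow_left₀ hx0 hx 2
    -- AM-GM: 2cR|t| ≤ a t² + c²R²/a
    have key0 : 2 * (c * R) * |z.1| ≤ a * z.1 ^ 2 + c ^ 2 * R ^ 2 / a := by
      have hinv : c ^ 2 * R ^ 2 / a * a = c ^ 2 * R ^ 2 :=
        div_mul_cancel₀ _ (ne_of_gt ha0)
      have h0 : 2 * (c * R) * |z.1| * a ≤ (a * z.1 ^ 2 + c ^ 2 * R ^ 2 / a) * a := by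
        rcases abs_cases z.1 with ⟨h, _⟩ | ⟨h, _⟩ <;> rw [h] <;>
          nlinarith [sq_nonneg (a * z.1 - c * R), sq_nonneg (a * z.1 + c * R)]
      exact le_of_mul_le_mul_right h0 ha0
    have h1 : minkQ z ≤ -a * z.1 ^ 2 + (c ^ 2 * R ^ 2 / a + R ^ 2) := by
      unfold minkQ
      nlinarith [key0, hxx]
    have hs : z.1 ^ 2 + ‖z.2‖ ^ 2 ≤ (1 + 2 * c ^ 2) * z.1 ^ 2 + 2 * R ^ 2 := by
      nlinarith [sq_nonneg (c * |z.1| - R)]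
    have h2 : -a * z.1 ^ 2 ≤ -a₂ * (z.1 ^ 2 + ‖z.2‖ ^ 2) + 2 * a₂ * R ^ 2 := by
      have hmul := mul_le_mul_of_nonneg_left hs (le_of_lt ha₂0)
      nlinarith [hmul, haa, sq_nonneg z.1]
    linarith [h1, h2]
  -- final coefficient b
  obtain ⟨b, hb0, hb1, hbN⟩ : ∃ b : ℝ, 0 < b ∧ b ≤ 1 / 2 ∧ b * (2 * N ^ 2) ≤ a₂ := by
    refine ⟨min (a₂ / (2 * N ^ 2)) (1 / 2), lt_min (by positivity) (by norm_num),
      min_le_right _ _, ?_⟩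
    rw [← le_div_iff₀ (by positivity)]
    exact min_le_left _ _
  obtain ⟨u, hu0, hu1, huu⟩ : ∃ u : ℝ, 0 < u ∧ u < 1 ∧ u * (1 + b) = 1 - b := by
    refine ⟨(1 - b) / (1 + b), div_pos (by linarith) (by linarith), ?_,
      div_mul_cancel₀ _ (by positivity)⟩
    rw [div_lt_one (by linarith)]; linarith
  have hsu := Real.sq_sqrt (le_of_lt hu0)
  have hsC := Real.sq_sqrt (le_of_lt hC20)
  refine ⟨Real.sqrt u, Real.sqrt C2, Real.sqrt_pos.mpr hu0,
    by nlinarith [Real.sqrt_nonneg u], Real.sqrt_pos.mpr hC20, ?_⟩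
  rintro w ⟨z, hz, hwz⟩
  -- bound minkQ w in terms of its own coordinates
  have hNw : ‖w‖ ≤ N * ‖z‖ := hwz ▸ hNz z
  have hQwz : minkQ w = minkQ z := hwz ▸ hΛ z
  have hWsq : ‖w‖ ^ 2 ≤ N ^ 2 * ‖z‖ ^ 2 := by
    nlinarith [hNw, norm_nonneg w, norm_nonneg z, hN0]
  have h3 : w.1 ^ 2 ≤ ‖w‖ ^ 2 := by
    nlinarith [norm_fst_le w, norm_nonneg (w.1), Real.norm_eq_abs (w.1),
      sq_abs (w.1), abs_nonneg (w.1)]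
  have h4 : ‖w.2‖ ^ 2 ≤ ‖w‖ ^ 2 := by
    nlinarith [norm_snd_le w, norm_nonneg (w.2)]
  have h5 : ‖z‖ ^ 2 ≤ z.1 ^ 2 + ‖z.2‖ ^ 2 := by
    have hnz : ‖z‖ = max ‖z.1‖ ‖z.2‖ := Prod.norm_def z
    rcases max_cases ‖z.1‖ ‖z.2‖ with ⟨h, _⟩ | ⟨h, _⟩ <;> rw [hnz, h]
    · rw [Real.norm_eq_abs, sq_abs]; nlinarith [sq_nonneg ‖z.2‖]
    · nlinarith [sq_nonneg z.1]
  have hsw : w.1 ^ 2 + ‖w.2‖ ^ 2 ≤ 2 * N ^ 2 * (z.1 ^ 2 + ‖z.2‖ ^ 2) := by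
    nlinarith [h3, h4, hWsq, mul_le_mul_of_nonneg_left h5
      (show (0:ℝ) ≤ 2 * N ^ 2 by positivity)]
  have hsz0 : (0:ℝ) ≤ z.1 ^ 2 + ‖z.2‖ ^ 2 := by positivity
  have h9 : -a₂ * (z.1 ^ 2 + ‖z.2‖ ^ 2) ≤ -b * (w.1 ^ 2 + ‖w.2‖ ^ 2) := by
    nlinarith [mul_le_mul_of_nonneg_left hsw (le_of_lt hb0),
      mul_le_mul_of_nonneg_right hbN hsz0]
  have hQ : -(w.1 ^ 2) + ‖w.2‖ ^ 2 ≤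
      -b * (w.1 ^ 2 + ‖w.2‖ ^ 2) + C2 := by
    have h1 := hQwz
    have h2 := key z hz
    unfold minkQ at h1 h2
    linarith [h1, h2, h9]
  -- conclude
  show ‖w.2‖ ≤ Real.sqrt u * |w.1| + Real.sqrt C2
  have hx2 : ‖w.2‖ ^ 2 ≤ u * w.1 ^ 2 + C2 := by
    have h1b : (0:ℝ) < 1 + b := by linarith
    have hle : (1 + b) * ‖w.2‖ ^ 2 ≤ (1 + b) * (u * w.1 ^ 2 + C2) := by
      have huu2 : u * (1 + b) * w.1 ^ 2 = (1 - b) * w.1 ^ 2 := by rw [huu]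
      nlinarith [hQ, huu2, mul_nonneg (le_of_lt hb0) (le_of_lt hC20)]
    exact le_of_mul_le_mul_left hle h1b
  have h1 : ‖w.2‖ ^ 2 ≤ (Real.sqrt u * |w.1| + Real.sqrt C2) ^ 2 := by
    nlinarith [hx2, sq_abs (w.1),
      mul_nonneg (mul_nonneg (Real.sqrt_nonneg u) (abs_nonneg (w.1))) (Real.sqrt_nonneg C2)]
  nlinarith [h1, norm_nonneg (w.2), Real.sqrt_nonneg u, Real.sqrt_nonneg C2,
    mul_nonneg (Real.sqrt_nonneg u) (abs_nonneg (w.1))]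
end

section
/- Let f ∈ 𝒮(ℝ^{1+n}) and suppose Lf(x,θ) = 0 for all x ∈ ℝⁿ and all θ ∈ S^{n-1}. Then the Fourier transform f̂(τ,ξ) vanishes on the closed spacelike-lightlike cone {(τ,ξ) : |τ| ≤ |ξ|}. -/
open scoped RealInnerProductSpace
open MeasureTheory

lemma exists_unit_theta {n : ℕ} (hn : 2 ≤ n) (τ : ℝ) (ξ : EuclideanSpace ℝ (Fin n))
    (h : |τ| ≤ ‖ξ‖) : ∃ θ : EuclideanSpace ℝ (Fin n), ‖θ‖ = 1 ∧ ⟪θ, ξ⟫ = -τ := by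
  rcases eq_or_ne ξ 0 with rfl | hξ
  · have hτ : τ = 0 := by simpa using abs_nonpos_iff.mp (by simpa using h)
    refine ⟨EuclideanSpace.single ⟨0, by omega⟩ (1:ℝ), ?_, ?_⟩
    · simp [EuclideanSpace.norm_single]
    · simp [hτ]
  · -- find unit u orthogonal to ξ
    have hfin : Module.finrank ℝ (EuclideanSpace ℝ (Fin n)) = n := finrank_euclideanSpace_fin
    have hK : Module.finrank ℝ ((ℝ ∙ ξ)ᗮ : Submodule ℝ (EuclideanSpace ℝ (Fin n))) = n - 1 := by
      have := Submodule.finrank_add_finrank_orthogonal (K := (ℝ ∙ ξ))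
      rw [finrank_span_singleton hξ, hfin] at this
      omega
    have hpos : 0 < Module.finrank ℝ ((ℝ ∙ ξ)ᗮ : Submodule ℝ (EuclideanSpace ℝ (Fin n))) := by
      omega
    obtain ⟨u, hu⟩ : ∃ u : (ℝ ∙ ξ)ᗮ, u ≠ 0 := by
      have : Nontrivial ((ℝ ∙ ξ)ᗮ : Submodule ℝ (EuclideanSpace ℝ (Fin n))) :=
        Module.nontrivial_of_finrank_pos hpos
      exact exists_ne 0
    have huo : ⟪(u : EuclideanSpace ℝ (Fin n)), ξ⟫ = 0 := by
      have := u.2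
      rw [Submodule.mem_orthogonal] at this
      have := this ξ (Submodule.mem_span_singleton_self ξ)
      rwa [real_inner_comm] at this
    have hune : (u : EuclideanSpace ℝ (Fin n)) ≠ 0 := by
      simpa [Submodule.coe_eq_zero] using hu
    set v : EuclideanSpace ℝ (Fin n) := ‖(u : EuclideanSpace ℝ (Fin n))‖⁻¹ • (u : EuclideanSpace ℝ (Fin n)) with hv
    have hvnorm : ‖v‖ = 1 := norm_smul_inv_norm hune
    have hvo : ⟪v, ξ⟫ = 0 := by
      rw [hv, real_inner_smul_left, huo, mul_zero]
    set a : ℝ := -τ / ‖ξ‖ with ha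
    have hξn : 0 < ‖ξ‖ := norm_pos_iff.mpr hξ
    have ha1 : a^2 ≤ 1 := by
      rw [ha, div_pow, div_le_one (by positivity)]
      calc (-τ)^2 = |τ|^2 := by rw [← abs_neg τ]; rw [sq_abs]
      _ ≤ ‖ξ‖^2 := by apply pow_le_pow_left₀ (abs_nonneg _) h
    set b : ℝ := Real.sqrt (1 - a^2) with hb
    have hb2 : b^2 = 1 - a^2 := Real.sq_sqrt (by linarith)
    set w : EuclideanSpace ℝ (Fin n) := ‖ξ‖⁻¹ • ξ with hw
    have hwnorm : ‖w‖ = 1 := norm_smul_inv_norm hξ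
    refine ⟨a • w + b • v, ?_, ?_⟩
    · have hvw : ⟪v, w⟫ = 0 := by
        rw [hw, real_inner_smul_right, hvo, mul_zero]
      have horth : ⟪a • w, b • v⟫ = 0 := by
        rw [real_inner_smul_left, real_inner_smul_right, real_inner_comm, hvw]
        ring
      have h1 : ‖a • w‖ = |a| := by rw [norm_smul, hwnorm, mul_one, Real.norm_eq_abs]
      have h2 : ‖b • v‖ = |b| := by rw [norm_smul, hvnorm, mul_one, Real.norm_eq_abs]
      have : ‖a • w + b • v‖^2 = 1 := by
        rw [norm_add_sq_real, horth, h1, h2, sq_abs, sq_abs, hb2]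
        ring
      nlinarith [norm_nonneg (a • w + b • v)]
    · have hwξ : ⟪w, ξ⟫ = ‖ξ‖ := by
        rw [hw, real_inner_smul_left, real_inner_self_eq_norm_sq]
        field_simp
      simp only [inner_add_left, real_inner_smul_left, hvo, hwξ, mul_zero, add_zero]
      rw [ha, div_mul_cancel₀ _ hξn.ne']

noncomputable def shearHomeo {n : ℕ} (θ : EuclideanSpace ℝ (Fin n)) :
    (ℝ × EuclideanSpace ℝ (Fin n)) ≃ₜ (ℝ × EuclideanSpace ℝ (Fin n)) where
  toFun p := (p.1, p.2 + p.1 • θ)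
  invFun p := (p.1, p.2 - p.1 • θ)
  left_inv p := by simp
  right_inv p := by simp
  continuous_toFun := by fun_prop
  continuous_invFun := by fun_prop

lemma shear_mp {n : ℕ} (θ : EuclideanSpace ℝ (Fin n)) :
    MeasureTheory.MeasurePreserving
      (fun p : ℝ × EuclideanSpace ℝ (Fin n) => (p.1, p.2 + p.1 • θ)) volume volume := by
  rw [MeasureTheory.Measure.volume_eq_prod]
  exact (MeasureTheory.MeasurePreserving.id volume).skew_product
    (g := fun s x => x + s • θ) (by fun_prop)
    (Filter.Eventually.of_forall fun s =>
      (MeasureTheory.measurePreserving_add_right volume (s • θ)).map_eq)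

/-- If the light ray transform `Lf(x,θ) = ∫ f(s, x+sθ) ds` of a Schwartz function `f` on
`ℝ^{1+n}` (n ≥ 2) vanishes for all `x ∈ ℝⁿ` and all unit `θ`, then the Fourier transform
`f̂(τ,ξ)` vanishes on the closed spacelike-lightlike cone `{|τ| ≤ |ξ|}`. -/
theorem stmt4 {n : ℕ} (hn : 2 ≤ n) (f : SchwartzMap (ℝ × EuclideanSpace ℝ (Fin n)) ℂ)
    (hL : ∀ (x θ : EuclideanSpace ℝ (Fin n)), ‖θ‖ = 1 →
      (∫ s : ℝ, f (s, x + s • θ)) = 0) :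
    ∀ (τ : ℝ) (ξ : EuclideanSpace ℝ (Fin n)), |τ| ≤ ‖ξ‖ →
      (∫ z : ℝ × EuclideanSpace ℝ (Fin n),
        Complex.exp (-Complex.I * ((z.1 * τ + ⟪z.2, ξ⟫ : ℝ) : ℂ)) * f z) = 0 := by
  intro τ ξ hτξ
  obtain ⟨θ, hθ1, hθξ⟩ := exists_unit_theta hn τ ξ hτξ
  set g : ℝ × EuclideanSpace ℝ (Fin n) → ℂ :=
    fun z => Complex.exp (-Complex.I * ((z.1 * τ + ⟪z.2, ξ⟫ : ℝ) : ℂ)) * f z with hg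
  have habs : ∀ r : ℝ, ‖Complex.exp (-Complex.I * (r : ℂ))‖ = 1 := by
    intro r
    rw [Complex.norm_exp]
    simp
  have hgcont : Continuous g := by
    apply Continuous.mul
    · apply Complex.continuous_exp.comp
      apply Continuous.mul continuous_const
      apply Complex.continuous_ofReal.comp
      exact ((continuous_fst.mul continuous_const).add
        (Continuous.inner continuous_snd continuous_const))
    · exact f.continuous
  haveI : (volume : MeasureTheory.Measure (ℝ × EuclideanSpace ℝ (Fin n))).HasTemperateGrowth := by
    rw [MeasureTheory.Measure.volume_eq_prod]
    exact MeasureTheory.Measure.IsAddHaarMeasure.instHasTemperateGrowth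
  have hgint : MeasureTheory.Integrable g := by
    refine f.integrable.norm.mono' hgcont.aestronglyMeasurable
      (Filter.Eventually.of_forall fun z => ?_)
    rw [hg]
    simp only [norm_mul, norm_norm]
    rw [show ‖Complex.exp (-Complex.I * ((z.1 * τ + ⟪z.2, ξ⟫ : ℝ) : ℂ))‖
        = ‖Complex.exp (-Complex.I * ((z.1 * τ + ⟪z.2, ξ⟫ : ℝ) : ℂ))‖ from rfl,
      habs, one_mul]
  have hmp := shear_mp θ
  have hemb : MeasurableEmbedding (fun p : ℝ × EuclideanSpace ℝ (Fin n) => (p.1, p.2 + p.1 • θ)) :=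
    (shearHomeo θ).measurableEmbedding
  have key : (∫ z, g z) = ∫ p : ℝ × EuclideanSpace ℝ (Fin n), g (p.1, p.2 + p.1 • θ) :=
    (hmp.integral_comp hemb g).symm
  have hcomp : MeasureTheory.Integrable (fun p : ℝ × EuclideanSpace ℝ (Fin n) => g (p.1, p.2 + p.1 • θ)) :=
    (hmp.integrable_comp_emb hemb).mpr hgint
  rw [show (∫ z : ℝ × EuclideanSpace ℝ (Fin n),
      Complex.exp (-Complex.I * ((z.1 * τ + ⟪z.2, ξ⟫ : ℝ) : ℂ)) * f z) = ∫ z, g z from rfl, key]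
  have hswap : (∫ p : ℝ × EuclideanSpace ℝ (Fin n), g (p.1, p.2 + p.1 • θ))
      = ∫ x : EuclideanSpace ℝ (Fin n), ∫ s : ℝ, g (s, x + s • θ) := by
    rw [MeasureTheory.Measure.volume_eq_prod] at hcomp ⊢
    exact MeasureTheory.integral_prod_symm _ hcomp
  rw [hswap]
  have hzero : ∀ x : EuclideanSpace ℝ (Fin n), (∫ s : ℝ, g (s, x + s • θ)) = 0 := by
    intro x
    have hph : ∀ s : ℝ, (s * τ + ⟪x + s • θ, ξ⟫ : ℝ) = ⟪x, ξ⟫ := by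
      intro s
      rw [inner_add_left, real_inner_smul_left, hθξ]
      ring
    have : (fun s : ℝ => g (s, x + s • θ))
        = fun s : ℝ => Complex.exp (-Complex.I * ((⟪x, ξ⟫ : ℝ) : ℂ)) * f (s, x + s • θ) := by
      funext s
      rw [hg]
      simp only
      rw [hph s]
    rw [this, MeasureTheory.integral_const_mul, hL x θ hθ1, mul_zero]
  simp only [hzero, MeasureTheory.integral_zero]
end

section
/- Let θ(q) = (cos q)e_n + (sin q)e_{n-1} and let ν(q,ξ) = ζ(q,ξ)/|ζ(q,ξ)| with ζ(q,ξ) = (-θ(q)·ξ, ξ). Then the map ℝ × S^{n-1} ∋ (q,ξ) ↦ ν(q,ξ) ∈ Sⁿ is a local analytic diffeomorphism near (q,ξ) = (0, e^{n-1}) onto a neighborhood of e^{n-1} in Sⁿ. -/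
open scoped RealInnerProductSpace

/-- `θ(q) = (cos q) e_n + (sin q) e_{n-1} ∈ S^{n-1} ⊂ ℝⁿ`. -/
noncomputable def thetaQ (n : ℕ) (hn : 2 ≤ n) (q : ℝ) : EuclideanSpace ℝ (Fin n) :=
  Real.cos q • EuclideanSpace.single ⟨n - 1, by omega⟩ (1 : ℝ) +
    Real.sin q • EuclideanSpace.single ⟨n - 2, by omega⟩ (1 : ℝ)

/-- `ζ(q,ξ) = (-θ(q)·ξ, ξ) ∈ ℝ^{1+n}`. -/
noncomputable def zetaMap (n : ℕ) (hn : 2 ≤ n) :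
    ℝ × EuclideanSpace ℝ (Fin n) → ℝ × EuclideanSpace ℝ (Fin n) :=
  fun p => (-⟪thetaQ n hn p.1, p.2⟫, p.2)

/-- The Euclidean norm on `ℝ^{1+n} = ℝ × ℝⁿ`. -/
noncomputable def enorm1n {n : ℕ} (w : ℝ × EuclideanSpace ℝ (Fin n)) : ℝ :=
  Real.sqrt (w.1 ^ 2 + ‖w.2‖ ^ 2)

/-- `ν(q,ξ) = ζ(q,ξ)/|ζ(q,ξ)|`, the unit normal to the plane `{(x - tθ(q))·ξ = p}`. -/
noncomputable def nuMap (n : ℕ) (hn : 2 ≤ n) :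
    ℝ × EuclideanSpace ℝ (Fin n) → ℝ × EuclideanSpace ℝ (Fin n) :=
  fun p => (enorm1n (zetaMap n hn p))⁻¹ • zetaMap n hn p

open scoped ContDiff

namespace Stmt10Aux

/-- index `n-1` -/
def iA (n : ℕ) (hn : 2 ≤ n) : Fin n := ⟨n - 1, by omega⟩
/-- index `n-2` -/
def iB (n : ℕ) (hn : 2 ≤ n) : Fin n := ⟨n - 2, by omega⟩

noncomputable def eB (n : ℕ) (hn : 2 ≤ n) : EuclideanSpace ℝ (Fin n) :=
  EuclideanSpace.single (iB n hn) (1 : ℝ)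

noncomputable def p0 (n : ℕ) (hn : 2 ≤ n) : ℝ × EuclideanSpace ℝ (Fin n) := (0, eB n hn)

noncomputable def cMap (n : ℕ) (hn : 2 ≤ n) : ℝ × EuclideanSpace ℝ (Fin n) → ℝ :=
  fun p => ⟪thetaQ n hn p.1, p.2⟫

noncomputable def PhiMap (n : ℕ) (hn : 2 ≤ n) :
    ℝ × EuclideanSpace ℝ (Fin n) → ℝ × EuclideanSpace ℝ (Fin n) :=
  fun p => (‖p.2‖ * (enorm1n (zetaMap n hn p))⁻¹) • zetaMap n hn p

noncomputable def Cc (n : ℕ) (hn : 2 ≤ n) : (ℝ × EuclideanSpace ℝ (Fin n)) →L[ℝ] ℝ :=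
  ContinuousLinearMap.fst ℝ ℝ _ +
    (EuclideanSpace.proj (iA n hn)).comp (ContinuousLinearMap.snd ℝ ℝ _)

noncomputable def Zc (n : ℕ) (hn : 2 ≤ n) :
    (ℝ × EuclideanSpace ℝ (Fin n)) →L[ℝ] (ℝ × EuclideanSpace ℝ (Fin n)) :=
  (-(Cc n hn)).prod (ContinuousLinearMap.snd ℝ ℝ _)

lemma Zc_apply (n : ℕ) (hn : 2 ≤ n) (w : ℝ × EuclideanSpace ℝ (Fin n)) :
    Zc n hn w = (-(w.1 + w.2 (iA n hn)), w.2) := by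
  simp [Zc, Cc, EuclideanSpace.proj]

lemma Zc_involutive (n : ℕ) (hn : 2 ≤ n) : Function.Involutive (Zc n hn) := by
  intro w
  rw [Zc_apply, Zc_apply]
  ext
  · simp
  · rfl

noncomputable def dPhi (n : ℕ) (hn : 2 ≤ n) :
    (ℝ × EuclideanSpace ℝ (Fin n)) ≃L[ℝ] (ℝ × EuclideanSpace ℝ (Fin n)) :=
  (LinearEquiv.ofInvolutive ((Zc n hn) : (ℝ × EuclideanSpace ℝ (Fin n)) →ₗ[ℝ]
      (ℝ × EuclideanSpace ℝ (Fin n))) (Zc_involutive n hn)).toContinuousLinearEquiv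

lemma dPhi_coe (n : ℕ) (hn : 2 ≤ n) :
    ((dPhi n hn : (ℝ × EuclideanSpace ℝ (Fin n)) ≃L[ℝ] _) :
      (ℝ × EuclideanSpace ℝ (Fin n)) →L[ℝ] (ℝ × EuclideanSpace ℝ (Fin n))) = Zc n hn := by
  ext w <;> rfl

lemma iA_ne_iB (n : ℕ) (hn : 2 ≤ n) : iA n hn ≠ iB n hn := by
  simp only [iA, iB, Ne, Fin.mk.injEq]
  omega

lemma eB_apply_iA (n : ℕ) (hn : 2 ≤ n) : eB n hn (iA n hn) = 0 := by
  simp [eB, EuclideanSpace.single_apply, iA_ne_iB n hn]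

lemma eB_apply_iB (n : ℕ) (hn : 2 ≤ n) : eB n hn (iB n hn) = 1 := by
  simp [eB, EuclideanSpace.single_apply]

lemma norm_eB (n : ℕ) (hn : 2 ≤ n) : ‖eB n hn‖ = 1 := by
  simp [eB]

lemma cMap_eq (n : ℕ) (hn : 2 ≤ n) : cMap n hn =
    fun p => Real.cos p.1 * p.2 (iA n hn) + Real.sin p.1 * p.2 (iB n hn) := by
  funext p
  simp [cMap, thetaQ, inner_add_left, real_inner_smul_left,
    EuclideanSpace.inner_single_left, iA, iB]

lemma cMap_p0 (n : ℕ) (hn : 2 ≤ n) : cMap n hn (p0 n hn) = 0 := by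
  rw [cMap_eq]
  simp [p0, eB_apply_iA n hn, eB_apply_iB n hn]

lemma zeta_p0 (n : ℕ) (hn : 2 ≤ n) : zetaMap n hn (p0 n hn) = (0, eB n hn) := by
  have h := cMap_p0 n hn
  simp only [cMap] at h
  simp [zetaMap, p0] at h ⊢
  exact h

lemma inner_self_eq (n : ℕ) (p : ℝ × EuclideanSpace ℝ (Fin n)) :
    ⟪p.2, p.2⟫ = ‖p.2‖ ^ 2 := real_inner_self_eq_norm_sq _

lemma enorm_zeta_eq (n : ℕ) (hn : 2 ≤ n) (p : ℝ × EuclideanSpace ℝ (Fin n)) :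
    enorm1n (zetaMap n hn p) = Real.sqrt ((cMap n hn p) ^ 2 + ⟪p.2, p.2⟫) := by
  rw [inner_self_eq]
  simp [enorm1n, zetaMap, cMap]

lemma enorm_zeta_p0 (n : ℕ) (hn : 2 ≤ n) : enorm1n (zetaMap n hn (p0 n hn)) = 1 := by
  rw [zeta_p0]
  simp [enorm1n, norm_eB n hn]

lemma Phi_p0 (n : ℕ) (hn : 2 ≤ n) : PhiMap n hn (p0 n hn) = p0 n hn := by
  have h1 : enorm1n ((0 : ℝ), eB n hn) = 1 := by simp [enorm1n, norm_eB n hn]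
  simp only [PhiMap, zeta_p0 n hn, h1]
  simp [p0, norm_eB n hn, Prod.smul_mk]

lemma nu_eq_Phi (n : ℕ) (hn : 2 ≤ n) (p : ℝ × EuclideanSpace ℝ (Fin n)) (h : ‖p.2‖ = 1) :
    nuMap n hn p = PhiMap n hn p := by
  simp [nuMap, PhiMap, h]

lemma enorm_smul (n : ℕ) (t : ℝ) (ht : 0 ≤ t) (w : ℝ × EuclideanSpace ℝ (Fin n)) :
    enorm1n (t • w) = t * enorm1n w := by
  simp only [enorm1n, Prod.smul_fst, Prod.smul_snd, smul_eq_mul, norm_smul,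
    Real.norm_eq_abs, mul_pow, sq_abs]
  rw [← mul_add, Real.sqrt_mul (sq_nonneg t), Real.sqrt_sq ht]

lemma enorm_Phi (n : ℕ) (hn : 2 ≤ n) (p : ℝ × EuclideanSpace ℝ (Fin n)) :
    enorm1n (PhiMap n hn p) = ‖p.2‖ := by
  have hs : 0 ≤ enorm1n (zetaMap n hn p) := Real.sqrt_nonneg _
  have ht : 0 ≤ ‖p.2‖ * (enorm1n (zetaMap n hn p))⁻¹ :=
    mul_nonneg (norm_nonneg _) (inv_nonneg.2 hs)
  rw [PhiMap, enorm_smul n _ ht]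
  rcases eq_or_ne (enorm1n (zetaMap n hn p)) 0 with h0 | h0
  · have : ‖p.2‖ = 0 := by
      have := Real.sqrt_eq_zero'.1 (by rw [← enorm1n]; exact h0 : Real.sqrt
        ((zetaMap n hn p).1 ^ 2 + ‖(zetaMap n hn p).2‖ ^ 2) = 0)
      have h2 : ‖(zetaMap n hn p).2‖ ^ 2 ≤ 0 := by nlinarith [sq_nonneg (zetaMap n hn p).1]
      have h3 : ‖(zetaMap n hn p).2‖ = 0 := by nlinarith [norm_nonneg (zetaMap n hn p).2]
      simpa [zetaMap] using h3
    rw [h0, this]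
    ring
  · field_simp

end Stmt10Aux
namespace Stmt10Aux

lemma hasFDerivAt_c (n : ℕ) (hn : 2 ≤ n) :
    HasFDerivAt (cMap n hn) (Cc n hn) (p0 n hn) := by
  rw [cMap_eq]
  have hA : HasFDerivAt (fun p : ℝ × EuclideanSpace ℝ (Fin n) => p.2 (iA n hn))
      ((EuclideanSpace.proj (iA n hn)).comp (ContinuousLinearMap.snd ℝ ℝ _)) (p0 n hn) :=
    ((EuclideanSpace.proj (iA n hn)).comp (ContinuousLinearMap.snd ℝ ℝ _)).hasFDerivAt
  have hB : HasFDerivAt (fun p : ℝ × EuclideanSpace ℝ (Fin n) => p.2 (iB n hn))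
      ((EuclideanSpace.proj (iB n hn)).comp (ContinuousLinearMap.snd ℝ ℝ _)) (p0 n hn) :=
    ((EuclideanSpace.proj (iB n hn)).comp (ContinuousLinearMap.snd ℝ ℝ _)).hasFDerivAt
  have hcos : HasFDerivAt (fun p : ℝ × EuclideanSpace ℝ (Fin n) => Real.cos p.1)
      ((-Real.sin (p0 n hn).1) • ContinuousLinearMap.fst ℝ ℝ _) (p0 n hn) :=
    (Real.hasDerivAt_cos (p0 n hn).1).comp_hasFDerivAt _ hasFDerivAt_fst
  have hsin : HasFDerivAt (fun p : ℝ × EuclideanSpace ℝ (Fin n) => Real.sin p.1)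
      ((Real.cos (p0 n hn).1) • ContinuousLinearMap.fst ℝ ℝ _) (p0 n hn) :=
    (Real.hasDerivAt_sin (p0 n hn).1).comp_hasFDerivAt _ hasFDerivAt_fst
  have h1 := hcos.mul hA
  have h2 := hsin.mul hB
  have h3 := h1.add h2
  refine h3.congr_fderiv ?_
  ext w
  · simp [Cc, p0, eB_apply_iA n hn, eB_apply_iB n hn, EuclideanSpace.proj]
  · have ha := eB_apply_iA n hn
    have hb := eB_apply_iB n hn
    simp [Cc, p0, ha, hb, EuclideanSpace.proj, ContinuousLinearMap.smul_apply]

lemma hasFDerivAt_zeta (n : ℕ) (hn : 2 ≤ n) :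
    HasFDerivAt (zetaMap n hn) (Zc n hn) (p0 n hn) :=
  ((hasFDerivAt_c n hn).neg).prodMk hasFDerivAt_snd

lemma lam_eq (n : ℕ) (hn : 2 ≤ n) :
    (fun p : ℝ × EuclideanSpace ℝ (Fin n) => ‖p.2‖ * (enorm1n (zetaMap n hn p))⁻¹) =
      fun p => Real.sqrt ⟪p.2, p.2⟫ *
        (Real.sqrt ((cMap n hn p) ^ 2 + ⟪p.2, p.2⟫))⁻¹ := by
  funext p
  rw [enorm_zeta_eq n hn, inner_self_eq, Real.sqrt_sq (norm_nonneg _)]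

lemma hasFDerivAt_lam (n : ℕ) (hn : 2 ≤ n) :
    HasFDerivAt (fun p : ℝ × EuclideanSpace ℝ (Fin n) =>
        ‖p.2‖ * (enorm1n (zetaMap n hn p))⁻¹)
      (0 : (ℝ × EuclideanSpace ℝ (Fin n)) →L[ℝ] ℝ) (p0 n hn) := by
  rw [lam_eq]
  set u : ℝ × EuclideanSpace ℝ (Fin n) → ℝ := fun p => ⟪p.2, p.2⟫ with hu_def
  have hu_diff : DifferentiableAt ℝ u (p0 n hn) := by
    have : ContDiffAt ℝ 1 u (p0 n hn) :=
      ContDiffAt.inner ℝ (contDiff_snd.contDiffAt) (contDiff_snd.contDiffAt)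
    exact this.differentiableAt one_ne_zero
  set U' := fderiv ℝ u (p0 n hn) with hU'
  have hu : HasFDerivAt u U' (p0 n hn) := hu_diff.hasFDerivAt
  have hu1 : u (p0 n hn) = 1 := by
    show ⟪(p0 n hn).2, (p0 n hn).2⟫ = 1
    rw [inner_self_eq n (p0 n hn)]
    rw [show (p0 n hn).2 = eB n hn from rfl, norm_eB n hn]
    norm_num
  have hc := hasFDerivAt_c n hn
  have hc0 := cMap_p0 n hn
  have hv := hc.mul hc
  have hv' : HasFDerivAt (fun p => cMap n hn p * cMap n hn p)
      (0 : (ℝ × EuclideanSpace ℝ (Fin n)) →L[ℝ] ℝ) (p0 n hn) := by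
    refine hv.congr_fderiv ?_
    rw [hc0]
    simp
  have hvu : HasFDerivAt (fun p => cMap n hn p * cMap n hn p + u p) U' (p0 n hn) := by
    have := hv'.add hu
    exact this.congr_fderiv (zero_add _)
  have hvu1 : cMap n hn (p0 n hn) * cMap n hn (p0 n hn) + u (p0 n hn) = 1 := by
    rw [hc0, hu1]; norm_num
  have hne1 : u (p0 n hn) ≠ 0 := by rw [hu1]; norm_num
  have hne2 : cMap n hn (p0 n hn) * cMap n hn (p0 n hn) + u (p0 n hn) ≠ 0 := by
    rw [hvu1]; norm_num
  have hsq1 := (Real.hasDerivAt_sqrt hne1).comp_hasFDerivAt (p0 n hn) hu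
  have hsq2 := (Real.hasDerivAt_sqrt hne2).comp_hasFDerivAt (p0 n hn) hvu
  have hne3 : Real.sqrt (cMap n hn (p0 n hn) * cMap n hn (p0 n hn) + u (p0 n hn)) ≠ 0 := by
    rw [hvu1, Real.sqrt_one]; norm_num
  have hinv := (hasDerivAt_inv hne3).comp_hasFDerivAt (p0 n hn) hsq2
  have hmul := hsq1.mul hinv
  have hgoal : HasFDerivAt (fun p => Real.sqrt (u p) *
      (Real.sqrt (cMap n hn p * cMap n hn p + u p))⁻¹)
      (0 : (ℝ × EuclideanSpace ℝ (Fin n)) →L[ℝ] ℝ) (p0 n hn) := by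
    refine hmul.congr_fderiv ?_
    simp only [Function.comp_apply]
    rw [hvu1, hu1]
    simp only [Real.sqrt_one]
    ext w <;> simp
  have heq : (fun p : ℝ × EuclideanSpace ℝ (Fin n) => Real.sqrt ⟪p.2, p.2⟫ *
      (Real.sqrt ((cMap n hn p) ^ 2 + ⟪p.2, p.2⟫))⁻¹) =
      (fun p => Real.sqrt (u p) * (Real.sqrt (cMap n hn p * cMap n hn p + u p))⁻¹) := by
    funext p
    rw [hu_def, sq]
  rw [heq]
  exact hgoal

lemma hasFDerivAt_Phi (n : ℕ) (hn : 2 ≤ n) :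
    HasFDerivAt (PhiMap n hn)
      ((dPhi n hn : (ℝ × EuclideanSpace ℝ (Fin n)) →L[ℝ] (ℝ × EuclideanSpace ℝ (Fin n))))
      (p0 n hn) := by
  have h := (hasFDerivAt_lam n hn).smul (hasFDerivAt_zeta n hn)
  have hlam0 : ‖(p0 n hn).2‖ * (enorm1n (zetaMap n hn (p0 n hn)))⁻¹ = 1 := by
    rw [enorm_zeta_p0 n hn]
    simp [p0, norm_eB n hn]
  refine h.congr_fderiv ?_
  rw [dPhi_coe, hlam0]
  ext w <;> simp

end Stmt10Aux
namespace Stmt10Aux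

lemma contDiff_c (n : ℕ) (hn : 2 ≤ n) : ContDiff ℝ ω (cMap n hn) := by
  have htheta : ContDiff ℝ ω (fun p : ℝ × EuclideanSpace ℝ (Fin n) => thetaQ n hn p.1) := by
    unfold thetaQ
    exact ((Real.contDiff_cos.comp contDiff_fst).smul contDiff_const).add
      ((Real.contDiff_sin.comp contDiff_fst).smul contDiff_const)
  exact ContDiff.inner ℝ htheta contDiff_snd

lemma contDiff_zeta (n : ℕ) (hn : 2 ≤ n) : ContDiff ℝ ω (zetaMap n hn) :=
  ((contDiff_c n hn).neg).prodMk contDiff_snd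

lemma contDiff_w (n : ℕ) (hn : 2 ≤ n) :
    ContDiff ℝ ω (fun p : ℝ × EuclideanSpace ℝ (Fin n) => (cMap n hn p) ^ 2 + ⟪p.2, p.2⟫) :=
  ((contDiff_c n hn).pow 2).add (ContDiff.inner ℝ contDiff_snd contDiff_snd)

lemma wpos (n : ℕ) (hn : 2 ≤ n) (p : ℝ × EuclideanSpace ℝ (Fin n)) (h : p.2 ≠ 0) :
    0 < (cMap n hn p) ^ 2 + ⟪p.2, p.2⟫ := by
  have h1 : (0:ℝ) < ⟪p.2, p.2⟫ := by
    rw [inner_self_eq n p]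
    exact pow_pos (norm_pos_iff.2 h) 2
  nlinarith [sq_nonneg (cMap n hn p)]

lemma contDiffAt_enorm_zeta (n : ℕ) (hn : 2 ≤ n) (p : ℝ × EuclideanSpace ℝ (Fin n))
    (h : p.2 ≠ 0) :
    ContDiffAt ℝ ω (fun p => enorm1n (zetaMap n hn p)) p := by
  have : ContDiffAt ℝ ω (fun p : ℝ × EuclideanSpace ℝ (Fin n) =>
      Real.sqrt ((cMap n hn p) ^ 2 + ⟪p.2, p.2⟫)) p :=
    ((contDiff_w n hn).contDiffAt).sqrt (ne_of_gt (wpos n hn p h))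
  exact this.congr_of_eventuallyEq (Filter.Eventually.of_forall
    (fun q => (enorm_zeta_eq n hn q)))

lemma enorm_zeta_ne (n : ℕ) (hn : 2 ≤ n) (p : ℝ × EuclideanSpace ℝ (Fin n)) (h : p.2 ≠ 0) :
    enorm1n (zetaMap n hn p) ≠ 0 := by
  rw [enorm_zeta_eq n hn]
  exact ne_of_gt (Real.sqrt_pos.2 (wpos n hn p h))

lemma contDiffAt_nu (n : ℕ) (hn : 2 ≤ n) (p : ℝ × EuclideanSpace ℝ (Fin n)) (h : p.2 ≠ 0) :
    ContDiffAt ℝ ω (nuMap n hn) p := by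
  exact ((contDiffAt_enorm_zeta n hn p h).inv (enorm_zeta_ne n hn p h)).smul
    (contDiff_zeta n hn).contDiffAt

lemma contDiffAt_norm2 (n : ℕ) (hn : 2 ≤ n) (p : ℝ × EuclideanSpace ℝ (Fin n)) (h : p.2 ≠ 0) :
    ContDiffAt ℝ ω (fun p : ℝ × EuclideanSpace ℝ (Fin n) => ‖p.2‖) p := by
  have h1 : ContDiffAt ℝ ω (fun p : ℝ × EuclideanSpace ℝ (Fin n) =>
      Real.sqrt ⟪p.2, p.2⟫) p := by
    refine ((ContDiff.inner ℝ contDiff_snd contDiff_snd).contDiffAt).sqrt ?_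
    rw [inner_self_eq n p]
    exact ne_of_gt (pow_pos (norm_pos_iff.2 h) 2)
  exact h1.congr_of_eventuallyEq (Filter.Eventually.of_forall (fun q => by
    show ‖q.2‖ = Real.sqrt ⟪q.2, q.2⟫
    rw [inner_self_eq n q, Real.sqrt_sq (norm_nonneg _)]))

lemma contDiffAt_Phi (n : ℕ) (hn : 2 ≤ n) : ContDiffAt ℝ ω (PhiMap n hn) (p0 n hn) := by
  have h2 : (p0 n hn).2 ≠ 0 := by
    intro h0
    have := norm_eB n hn
    rw [show eB n hn = (p0 n hn).2 from rfl, h0] at this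
    simp at this
  exact ((contDiffAt_norm2 n hn _ h2).mul
    ((contDiffAt_enorm_zeta n hn _ h2).inv (enorm_zeta_ne n hn _ h2))).smul
    (contDiff_zeta n hn).contDiffAt

end Stmt10Aux

open Stmt10Aux in
/-- The map `(q,ξ) ↦ ν(q,ξ)`, restricted to `ξ ∈ S^{n-1}`, is a local analytic
diffeomorphism near `(0, e^{n-1})` onto a neighborhood of `e^{n-1}` in `Sⁿ ⊂ ℝ^{1+n}`. -/
theorem stmt10 (n : ℕ) (hn : 2 ≤ n) :
    ∃ U : Set (ℝ × EuclideanSpace ℝ (Fin n)), IsOpen U ∧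
      ((0 : ℝ), EuclideanSpace.single (⟨n - 2, by omega⟩ : Fin n) (1 : ℝ)) ∈ U ∧
      AnalyticOn ℝ (nuMap n hn) U ∧
      Set.InjOn (nuMap n hn) {p ∈ U | ‖p.2‖ = 1} ∧
      ∃ V : Set (ℝ × EuclideanSpace ℝ (Fin n)), IsOpen V ∧
        ((0 : ℝ), EuclideanSpace.single (⟨n - 2, by omega⟩ : Fin n) (1 : ℝ)) ∈ V ∧
        nuMap n hn '' {p ∈ U | ‖p.2‖ = 1} = V ∩ {w | enorm1n w = 1} ∧
        ∃ Ψ : ℝ × EuclideanSpace ℝ (Fin n) → ℝ × EuclideanSpace ℝ (Fin n),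
          AnalyticOn ℝ Ψ V ∧ ∀ p ∈ {p ∈ U | ‖p.2‖ = 1}, Ψ (nuMap n hn p) = p := by
  classical
  have hcd := contDiffAt_Phi n hn
  have hfd := hasFDerivAt_Phi n hn
  have hone : (ω : WithTop ℕ∞) ≠ 0 := by simp
  set h : OpenPartialHomeomorph (ℝ × EuclideanSpace ℝ (Fin n)) (ℝ × EuclideanSpace ℝ (Fin n)) :=
    hcd.toOpenPartialHomeomorph (PhiMap n hn) hfd hone with hh
  have hcoe : ⇑h = PhiMap n hn := rfl
  have hsrc : p0 n hn ∈ h.source := hcd.mem_toOpenPartialHomeomorph_source hfd hone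
  have hPhip0 : PhiMap n hn (p0 n hn) = p0 n hn := Phi_p0 n hn
  have htgt : p0 n hn ∈ h.target := by
    have := hcd.image_mem_toOpenPartialHomeomorph_target hfd hone
    rwa [hPhip0] at this
  have hsymm_cd : ContDiffAt ℝ ω (⇑h.symm) (PhiMap n hn (p0 n hn)) :=
    hcd.to_localInverse hfd hone
  rw [hPhip0] at hsymm_cd
  have hsymm_an : AnalyticAt ℝ (⇑h.symm) (p0 n hn) := hsymm_cd.analyticAt
  have hmemB : {w | AnalyticAt ℝ (⇑h.symm) w} ∩ h.target ∈ nhds (p0 n hn) :=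
    Filter.inter_mem hsymm_an.eventually_analyticAt (h.open_target.mem_nhds htgt)
  obtain ⟨B, hBsub, hBopen, hBmem⟩ := mem_nhds_iff.mp hmemB
  have hNopen : IsOpen {p : ℝ × EuclideanSpace ℝ (Fin n) | p.2 ≠ 0} :=
    isOpen_compl_singleton.preimage continuous_snd
  set U : Set (ℝ × EuclideanSpace ℝ (Fin n)) :=
    (h.source ∩ PhiMap n hn ⁻¹' B) ∩ {p | p.2 ≠ 0} with hU
  have hUopen : IsOpen U := by
    refine IsOpen.inter ?_ hNopen
    have := h.isOpen_inter_preimage hBopen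
    rwa [hcoe] at this
  have hp0U : p0 n hn ∈ U := by
    refine ⟨⟨hsrc, ?_⟩, ?_⟩
    · show PhiMap n hn (p0 n hn) ∈ B
      rw [hPhip0]; exact hBmem
    · show (p0 n hn).2 ≠ 0
      intro h0
      have := norm_eB n hn
      rw [show eB n hn = (p0 n hn).2 from rfl, h0] at this
      simp at this
  have hUsub : ∀ p ∈ U, p ∈ h.source := fun p hp => hp.1.1
  refine ⟨U, hUopen, hp0U, ?_, ?_, B, hBopen, hBmem, ?_, ⇑h.symm, ?_, ?_⟩
  · -- AnalyticOn nuMap U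
    intro p hp
    exact ((contDiffAt_nu n hn p hp.2).analyticAt).analyticWithinAt
  · -- InjOn
    intro p hp q hq hpq
    refine h.injOn (hUsub p hp.1) (hUsub q hq.1) ?_
    rw [hcoe, ← nu_eq_Phi n hn p hp.2, ← nu_eq_Phi n hn q hq.2]
    exact hpq
  · -- image equality
    ext w
    constructor
    · rintro ⟨p, ⟨hpU, hpS⟩, rfl⟩
      rw [nu_eq_Phi n hn p hpS]
      exact ⟨hpU.1.2, by simp only [Set.mem_setOf_eq]; rw [enorm_Phi n hn p, hpS]⟩
    · rintro ⟨hwB, hw1⟩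
      have hwT : w ∈ h.target := (hBsub hwB).2
      have hpsrc : h.symm w ∈ h.source := h.map_target hwT
      have hPhw : PhiMap n hn (h.symm w) = w := by
        rw [← hcoe]; exact h.right_inv hwT
      have hnorm : ‖(h.symm w).2‖ = 1 := by
        rw [← enorm_Phi n hn (h.symm w), hPhw]; exact hw1
      refine ⟨h.symm w, ⟨⟨⟨hpsrc, ?_⟩, ?_⟩, hnorm⟩, ?_⟩
      · show PhiMap n hn (h.symm w) ∈ B
        rw [hPhw]; exact hwB
      · show (h.symm w).2 ≠ 0
        intro h0; rw [h0] at hnorm; simp at hnorm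
      · rw [nu_eq_Phi n hn _ hnorm, hPhw]
  · -- AnalyticOn symm B
    intro w hw
    exact ((hBsub hw).1).analyticWithinAt
  · -- left inverse
    intro p hp
    rw [nu_eq_Phi n hn p hp.2, ← hcoe]
    exact h.left_inv (hUsub p hp.1)
end
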